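/- (Local Yang-Baxter equation for the one-parameter R-matrix.) For a real number x define R(x) as the 2×2 matrix with rows (x, 1+x) and (1−x, −x), and for i < j in {1,2,3} let R_{ij}(x) be the 3×3 matrix equal to the identity except that R(x) is embedded at rows and columns i,j. Let x, y, z be real numbers with x + z − xyz ≠ 0 and set X = xy/(x+z−xyz), Y = x+z−xyz, Z = yz/(x+z−xyz). Then R_{12}(x) R_{13}(y) R_{23}(z) = R_{23}(Z) R_{13}(Y) R_{12}(X). -/

import Mathlib

open Matrix

/-- Embedding of the one-parameter R-matrix `R(x) = !![x, 1+x; 1−x, −x]` into the 3×3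
identity at rows/columns `1,2`. -/
def R12 (x : ℝ) : Matrix (Fin 3) (Fin 3) ℝ :=
  !![x, 1 + x, 0; 1 - x, -x, 0; 0, 0, 1]

/-- Embedding at rows/columns `1,3`. -/
def R13 (x : ℝ) : Matrix (Fin 3) (Fin 3) ℝ :=
  !![x, 0, 1 + x; 0, 1, 0; 1 - x, 0, -x]

/-- Embedding at rows/columns `2,3`. -/
def R23 (x : ℝ) : Matrix (Fin 3) (Fin 3) ℝ :=
  !![1, 0, 0; 0, x, 1 + x; 0, 1 - x, -x]

/-- Local Yang–Baxter equation for the one-parameter R-matrix, with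
`X = xy/(x+z−xyz)`, `Y = x+z−xyz`, `Z = yz/(x+z−xyz)`. -/
theorem stmt_18 (x y z : ℝ) (h : x + z - x * y * z ≠ 0)
    (X Y Z : ℝ)
    (hX : X = x * y / (x + z - x * y * z))
    (hY : Y = x + z - x * y * z)
    (hZ : Z = y * z / (x + z - x * y * z)) :
    R12 x * R13 y * R23 z = R23 Z * R13 Y * R12 X := by
  subst hX hY hZ
  ext i j
  fin_cases i <;> fin_cases j <;>
    (try simp [R12, R13, R23, Matrix.mul_apply, Fin.sum_univ_three, Matrix.vecHead,
      Matrix.vecTail]) <;>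
    (try field_simp) <;> grind
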